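/- Every shortest LCD embedding C̃ of an [n,k] code C with hull dimension ℓ has a generator matrix of the form [[H, I_ℓ],[A, C']], where H generates Hull(C), [H; A] generates C, and C' is some (k−ℓ)×ℓ matrix. -/

import Mathlib

open Matrix

variable {F : Type*} [Field F]

/-- Row space of a matrix: the code generated by its rows. -/
def rowSpace {m ι : Type*} (G : Matrix m ι F) : Submodule F (ι → F) :=
  Submodule.span F (Set.range G)

/-- Dual of a code with respect to the form `⟨x, c⟩ = ∑ i, x i * s (c i)`.
For `s = id` this is the Euclidean dual; for `s = (· ^ q)` the Hermitian dual. -/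
def sDual {ι : Type*} [Fintype ι] (s : F → F) (C : Submodule F (ι → F)) :
    Submodule F (ι → F) where
  carrier := {x | ∀ c ∈ C, ∑ i, x i * s (c i) = 0}
  zero_mem' := by intro c hc; simp
  add_mem' := by
    intro a b ha hb c hc
    simp [Pi.add_apply, add_mul, Finset.sum_add_distrib, ha c hc, hb c hc]
  smul_mem' := by
    intro r a ha c hc
    simp [Pi.smul_apply, smul_eq_mul, mul_assoc, ← Finset.mul_sum, ha c hc]

/-- The hull of a code: its intersection with its dual. -/
def sHull {ι : Type*} [Fintype ι] (s : F → F) (C : Submodule F (ι → F)) :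
    Submodule F (ι → F) :=
  C ⊓ sDual s C

/-- `Ct` is an LCD embedding of `C`: `Ct` is LCD and puncturing `Ct` on the
complement of some coordinate subset recovers `C`. -/
def IsLCDEmbedding {ι : Type*} [Fintype ι] {N : ℕ} (s : F → F)
    (C : Submodule F (ι → F)) (Ct : Submodule F (Fin N → F)) : Prop :=
  sHull s Ct = ⊥ ∧ ∃ f : ι → Fin N, Function.Injective f ∧
    Submodule.map (LinearMap.funLeft F F f) Ct = C

lemma mem_sDual {F : Type*} [Field F] {ι : Type*} [Fintype ι] {s : F → F}
    {C : Submodule F (ι → F)} {x : ι → F} :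
    x ∈ sDual s C ↔ ∀ c ∈ C, ∑ i, x i * s (c i) = 0 := Iff.rfl

lemma span_range_comp {F : Type*} [Field F] {ι : Type*} {M N : Type*}
    [AddCommGroup M] [Module F M] [AddCommGroup N] [Module F N]
    (f : M →ₗ[F] N) (v : ι → M) :
    Submodule.span F (Set.range (⇑f ∘ v)) = Submodule.map f (Submodule.span F (Set.range v)) := by
  rw [Set.range_comp, Submodule.map_span]

set_option maxHeartbeats 1600000
set_option synthInstance.maxHeartbeats 400000

/-- every shortest LCD embedding has a generator matrix of the form
`[[H, I_ℓ], [A, C']]`. -/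
theorem stmt11 {F : Type*} [Field F] [Fintype F] {n k ℓ : ℕ}
    (C : Submodule F (Fin n → F))
    (hk : k = Module.finrank F C)
    (hl : ℓ = Module.finrank F ↥(sHull (id : F → F) C))
    (Ct : Submodule F (Fin n ⊕ Fin ℓ → F))
    (hLCD : sHull (id : F → F) Ct = ⊥)
    (hpunct : Submodule.map (LinearMap.funLeft F F (Sum.inl : Fin n → Fin n ⊕ Fin ℓ)) Ct = C) :
    ∃ (H : Matrix (Fin ℓ) (Fin n) F) (A : Matrix (Fin (k - ℓ)) (Fin n) F)
      (C' : Matrix (Fin (k - ℓ)) (Fin ℓ) F),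
      rowSpace H = sHull (id : F → F) C ∧
      rowSpace (fromRows H A) = C ∧
      LinearIndependent F (fromBlocks H (1 : Matrix (Fin ℓ) (Fin ℓ) F) A C') ∧
      rowSpace (fromBlocks H (1 : Matrix (Fin ℓ) (Fin ℓ) F) A C') = Ct := by
  classical
  set p : (Fin n ⊕ Fin ℓ → F) →ₗ[F] (Fin n → F) :=
    LinearMap.funLeft F F (Sum.inl : Fin n → Fin n ⊕ Fin ℓ) with hpdef
  set q : (Fin n ⊕ Fin ℓ → F) →ₗ[F] (Fin ℓ → F) :=
    LinearMap.funLeft F F (Sum.inr : Fin ℓ → Fin n ⊕ Fin ℓ) with hqdef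
  set Hl : Submodule F (Fin n → F) := sHull (id : F → F) C with hHldef
  set L : Submodule F (Fin n ⊕ Fin ℓ → F) := Ct ⊓ Submodule.comap p Hl with hLdef
  -- the key cancellation lemma
  have key : ∀ x ∈ Ct, p x ∈ sDual (id : F → F) C → (∀ j, x (Sum.inr j) = 0) → x = 0 := by
    intro x hx hdual hz
    have hxd : x ∈ sDual (id : F → F) Ct := by
      show ∀ c ∈ Ct, ∑ i, x i * id (c i) = 0
      intro c hc
      rw [Fintype.sum_sum_type]
      have hpc : p c ∈ C := hpunct ▸ Submodule.mem_map_of_mem hc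
      have h1 : ∑ i : Fin n, x (Sum.inl i) * id (c (Sum.inl i)) = 0 := by
        have := hdual (p c) hpc
        simpa [hpdef, LinearMap.funLeft_apply] using this
      have h2 : ∑ j : Fin ℓ, x (Sum.inr j) * id (c (Sum.inr j)) = 0 := by
        simp [hz]
      rw [h1, h2, add_zero]
    have hx' : x ∈ sHull (id : F → F) Ct := by
      show x ∈ Ct ⊓ sDual (id : F → F) Ct
      exact Submodule.mem_inf.mpr ⟨hx, hxd⟩
    rw [hLCD] at hx'
    simpa using hx'
  -- membership facts
  have hmemHl : ∀ x ∈ L, p x ∈ Hl := fun x hx => hx.2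
  have hmemC : ∀ x ∈ Ct, p x ∈ C := fun x hx => hpunct ▸ Submodule.mem_map_of_mem hx
  -- q restricted to L is injective
  have hqL_inj : Function.Injective (q.comp L.subtype) := by
    rw [← LinearMap.ker_eq_bot]
    rw [Submodule.eq_bot_iff]
    rintro ⟨x, hxL⟩ hker
    have hq0 : q x = 0 := hker
    have hz : ∀ j, x (Sum.inr j) = 0 := fun j => congrFun hq0 j
    have hdual : p x ∈ sDual (id : F → F) C := (Submodule.mem_inf.mp (hmemHl x hxL)).2
    exact Subtype.ext (key x hxL.1 hdual hz)
  -- p restricted to L, surjective onto the hull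
  set pL : ↥L →ₗ[F] ↥Hl := p.restrict hmemHl with hpLdef
  have hpL_surj : Function.Surjective pL := by
    rintro ⟨h, hh⟩
    have hhC : h ∈ C := hh.1
    rw [← hpunct] at hhC
    obtain ⟨x, hxCt, hpx⟩ := hhC
    have hxL : x ∈ L := ⟨hxCt, by show p x ∈ Hl; rw [hpx]; exact hh⟩
    exact ⟨⟨x, hxL⟩, Subtype.ext hpx⟩
  -- dimension count : finrank L = ℓ
  have hrankHl : Module.finrank F ↥Hl = ℓ := hl.symm
  have hrankL : Module.finrank F ↥L = ℓ := by
    have h1 : Module.finrank F ↥L ≤ ℓ := by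
      have := LinearMap.finrank_le_finrank_of_injective hqL_inj
      simpa using this
    have h2 : ℓ ≤ Module.finrank F ↥L := by
      have h3 := LinearMap.finrank_range_le pL
      rwa [LinearMap.range_eq_top.mpr hpL_surj, finrank_top, hrankHl] at h3
    omega
  -- pL is injective
  have hpL_inj : Function.Injective pL := by
    rw [← LinearMap.ker_eq_bot]
    have h2 := LinearMap.finrank_range_add_finrank_ker pL
    rw [LinearMap.range_eq_top.mpr hpL_surj, finrank_top, hrankHl, hrankL] at h2
    exact Submodule.finrank_eq_zero.mp (by omega)
  -- p restricted to Ct is a bijection onto C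
  set pC : ↥Ct →ₗ[F] ↥C := p.restrict hmemC with hpCdef
  have hpC_surj : Function.Surjective pC := by
    rintro ⟨c, hc⟩
    rw [← hpunct] at hc
    obtain ⟨x, hxCt, hpx⟩ := hc
    exact ⟨⟨x, hxCt⟩, Subtype.ext hpx⟩
  have hpC_inj : Function.Injective pC := by
    rw [← LinearMap.ker_eq_bot, Submodule.eq_bot_iff]
    rintro ⟨x, hxCt⟩ hker
    have hpx0 : p x = 0 := congrArg Subtype.val (show pC ⟨x, hxCt⟩ = 0 from hker)
    have hxL : x ∈ L := ⟨hxCt, by show p x ∈ Hl; rw [hpx0]; exact Hl.zero_mem⟩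
    have : pL ⟨x, hxL⟩ = pL 0 := by
      apply Subtype.ext
      simpa [hpLdef, LinearMap.restrict_apply] using hpx0
    have h5 := hpL_inj this
    have hx0 : x = 0 := Subtype.ext_iff.mp h5
    exact Subtype.ext hx0
  let eC : ↥Ct ≃ₗ[F] ↥C := LinearEquiv.ofBijective pC ⟨hpC_inj, hpC_surj⟩
  -- bijection L ≃ F^ℓ via q
  let eQ : ↥L ≃ₗ[F] (Fin ℓ → F) :=
    (q.comp L.subtype).linearEquivOfInjective hqL_inj (by simpa using hrankL)
  let eP : ↥L ≃ₗ[F] ↥Hl := LinearEquiv.ofBijective pL ⟨hpL_inj, hpL_surj⟩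
  let basisL : Module.Basis (Fin ℓ) F ↥L := (Pi.basisFun F (Fin ℓ)).map eQ.symm
  have hbasisL_q : ∀ j, q ((basisL j : Fin n ⊕ Fin ℓ → F)) = Pi.basisFun F (Fin ℓ) j := by
    intro j
    have : eQ (basisL j) = Pi.basisFun F (Fin ℓ) j := by
      simp [basisL, Module.Basis.map_apply]
    simpa [eQ, LinearMap.linearEquivOfInjective_apply] using this
  have hBinr : ∀ j j', (basisL j : Fin n ⊕ Fin ℓ → F) (Sum.inr j') =
      (1 : Matrix (Fin ℓ) (Fin ℓ) F) j j' := by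
    intro j j'
    have := congrFun (hbasisL_q j) j'
    rw [show q ((basisL j : Fin n ⊕ Fin ℓ → F)) j' = (basisL j : Fin n ⊕ Fin ℓ → F) (Sum.inr j')
      from rfl] at this
    rw [this]
    simp [Pi.basisFun_apply, Pi.single_apply, Matrix.one_apply, eq_comm]
  -- map p L = Hl
  have hmapL : Submodule.map p L = Hl := by
    apply le_antisymm
    · rintro _ ⟨x, hx, rfl⟩
      exact hx.2
    · intro h hh
      have hhC : h ∈ C := hh.1
      rw [← hpunct] at hhC
      obtain ⟨x, hxCt, hpx⟩ := hhC
      exact ⟨x, ⟨hxCt, by show p x ∈ Hl; rw [hpx]; exact hh⟩, hpx⟩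
  -- build a basis of C extending the hull basis
  have hleq : Hl ≤ C := inf_le_left
  set Hl₀ : Submodule F ↥C := Hl.comap C.subtype with hHl0def
  let eH0 : ↥Hl₀ ≃ₗ[F] ↥Hl := Submodule.comapSubtypeEquivOfLe hleq
  obtain ⟨W, hW⟩ := Submodule.exists_isCompl Hl₀
  have hrankC : Module.finrank F ↥C = k := hk.symm
  have hrankHl0 : Module.finrank F ↥Hl₀ = ℓ := by rw [eH0.finrank_eq, hrankHl]
  have hlk : ℓ ≤ k := by
    rw [← hrankHl0, ← hrankC]
    exact Submodule.finrank_le Hl₀ |>.trans_eq (finrank_top F ↥C ▸ rfl)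
  have hrW : Module.finrank F ↥W = k - ℓ := by
    have h1 := Submodule.finrank_add_eq_of_isCompl hW
    rw [hrankHl0, hrankC] at h1
    omega
  haveI : Module.Free F ↥W := Module.Free.of_divisionRing F ↥W
  let bW : Module.Basis (Fin (k - ℓ)) F ↥W := Module.finBasisOfFinrankEq F ↥W hrW
  let bHl₀ : Module.Basis (Fin ℓ) F ↥Hl₀ := (basisL.map eP).map eH0.symm
  let bC : Module.Basis (Fin ℓ ⊕ Fin (k - ℓ)) F ↥C :=
    (bHl₀.prod bW).map (Submodule.prodEquivOfIsCompl _ _ hW)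
  let B : Module.Basis (Fin ℓ ⊕ Fin (k - ℓ)) F ↥Ct := bC.map eC.symm
  -- identification of the top rows
  have hBval : ∀ j, (B (Sum.inl j) : Fin n ⊕ Fin ℓ → F) = (basisL j : Fin n ⊕ Fin ℓ → F) := by
    intro j
    have hxCt : ((basisL j : Fin n ⊕ Fin ℓ → F)) ∈ Ct := (basisL j).2.1
    have : eC ⟨(basisL j : Fin n ⊕ Fin ℓ → F), hxCt⟩ = bC (Sum.inl j) := by
      apply Subtype.ext
      have hLHS : ((eC ⟨(basisL j : Fin n ⊕ Fin ℓ → F), hxCt⟩ : ↥C) : Fin n → F) =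
          p ((basisL j : Fin n ⊕ Fin ℓ → F)) := rfl
      have hRHS : ((bC (Sum.inl j) : ↥C) : Fin n → F) =
          p ((basisL j : Fin n ⊕ Fin ℓ → F)) := by
        show ((bC (Sum.inl j) : ↥C) : Fin n → F) = _
        have h1 : bC (Sum.inl j) =
            (Submodule.prodEquivOfIsCompl _ _ hW) ((bHl₀.prod bW) (Sum.inl j)) := by
          simp [bC, Module.Basis.map_apply]
        have h2 : (bHl₀.prod bW) (Sum.inl j) = (bHl₀ j, 0) := by
          apply Prod.ext
          · simp [Module.Basis.prod_apply_inl_fst]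
          · simp [Module.Basis.prod_apply_inl_snd]
        rw [h1, h2]
        have h3 : (Submodule.prodEquivOfIsCompl _ _ hW) (bHl₀ j, (0 : ↥W)) =
            ((bHl₀ j : ↥C)) := by
          simp [Submodule.coe_prodEquivOfIsCompl']
        rw [h3]
        have h4 : ((bHl₀ j : ↥C) : Fin n → F) = ((eP (basisL j) : ↥Hl) : Fin n → F) := by
          simp [bHl₀, Module.Basis.map_apply, eH0, Submodule.comapSubtypeEquivOfLe]
        rw [h4]
        rfl
      rw [hLHS, hRHS]
    have : eC.symm (bC (Sum.inl j)) = ⟨(basisL j : Fin n ⊕ Fin ℓ → F), hxCt⟩ := by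
      rw [← this]; exact eC.symm_apply_apply _
    show ((B (Sum.inl j) : ↥Ct) : Fin n ⊕ Fin ℓ → F) = _
    rw [show B (Sum.inl j) = eC.symm (bC (Sum.inl j)) from by simp [B, Module.Basis.map_apply], this]
  -- the matrices
  refine ⟨fun j i => (B (Sum.inl j) : Fin n ⊕ Fin ℓ → F) (Sum.inl i),
         fun i i' => (B (Sum.inr i) : Fin n ⊕ Fin ℓ → F) (Sum.inl i'),
         fun i j => (B (Sum.inr i) : Fin n ⊕ Fin ℓ → F) (Sum.inr j), ?_, ?_, ?_, ?_⟩
  · -- rowSpace H = hull C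
    have hH : (fun j i => (B (Sum.inl j) : Fin n ⊕ Fin ℓ → F) (Sum.inl i)) =
        ⇑(p.comp L.subtype) ∘ basisL := by
      funext j
      rw [hBval j]
      rfl
    unfold rowSpace
    rw [hH, span_range_comp, Module.Basis.span_eq, Submodule.map_comp,
      Submodule.map_top, Submodule.range_subtype, hmapL]
  · -- rowSpace [H; A] = C
    have hHA : fromRows (fun j i => (B (Sum.inl j) : Fin n ⊕ Fin ℓ → F) (Sum.inl i))
        (fun i i' => (B (Sum.inr i) : Fin n ⊕ Fin ℓ → F) (Sum.inl i')) =
        ⇑(p.comp Ct.subtype) ∘ B := by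
      funext r
      rcases r with j | i <;> rfl
    rw [rowSpace, hHA, span_range_comp, Module.Basis.span_eq, Submodule.map_comp,
      Submodule.map_top, Submodule.range_subtype, hpunct]
  · -- linear independence
    have hM : fromBlocks (fun j i => (B (Sum.inl j) : Fin n ⊕ Fin ℓ → F) (Sum.inl i))
        (1 : Matrix (Fin ℓ) (Fin ℓ) F)
        (fun i i' => (B (Sum.inr i) : Fin n ⊕ Fin ℓ → F) (Sum.inl i'))
        (fun i j => (B (Sum.inr i) : Fin n ⊕ Fin ℓ → F) (Sum.inr j)) =
        ⇑Ct.subtype ∘ B := by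
      funext r c
      rcases r with j | i <;> rcases c with i' | j'
      · rfl
      · show (1 : Matrix (Fin ℓ) (Fin ℓ) F) j j' = (B (Sum.inl j) : Fin n ⊕ Fin ℓ → F) (Sum.inr j')
        rw [hBval j, hBinr]
      · rfl
      · rfl
    rw [hM]
    exact B.linearIndependent.map' Ct.subtype (Submodule.ker_subtype Ct)
  · -- rowSpace = Ct
    have hM : fromBlocks (fun j i => (B (Sum.inl j) : Fin n ⊕ Fin ℓ → F) (Sum.inl i))
        (1 : Matrix (Fin ℓ) (Fin ℓ) F)
        (fun i i' => (B (Sum.inr i) : Fin n ⊕ Fin ℓ → F) (Sum.inl i'))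
        (fun i j => (B (Sum.inr i) : Fin n ⊕ Fin ℓ → F) (Sum.inr j)) =
        ⇑Ct.subtype ∘ B := by
      funext r c
      rcases r with j | i <;> rcases c with i' | j'
      · rfl
      · show (1 : Matrix (Fin ℓ) (Fin ℓ) F) j j' = (B (Sum.inl j) : Fin n ⊕ Fin ℓ → F) (Sum.inr j')
        rw [hBval j, hBinr]
      · rfl
      · rfl
    rw [rowSpace, hM, span_range_comp, Module.Basis.span_eq, Submodule.map_top,
      Submodule.range_subtype]
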